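/- There exist constants c̃ > 0, C̃ > 0 and c > 0 such that the following holds. For every positive integer k and every ρ with 0 < ρ ≤ 1/2, let X₁, …, X_k be independent {0,1}-valued random variables with P[Xᵢ = 1] = ρ, and let σ = √(k·ρ·(1−ρ)). Then for every real λ with 0 < λ ≤ c·σ, P[ |Σ_{i=1}^k Xᵢ − ρ·k| ≥ λ·σ ] ≥ c̃·exp(−C̃·λ²). -/

import Mathlib

lemma sqrtpi_le_stirlingSeq (n : ℕ) (hn : 1 ≤ n) :
    Real.sqrt Real.pi ≤ Stirling.stirlingSeq n := by
  obtain ⟨m, rfl⟩ : ∃ m, n = m + 1 := ⟨n - 1, by omega⟩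
  have ht : Filter.Tendsto (Stirling.stirlingSeq ∘ Nat.succ) Filter.atTop
      (nhds (Real.sqrt Real.pi)) :=
    Stirling.tendsto_stirlingSeq_sqrt_pi.comp (Filter.tendsto_add_atTop_nat 1)
  exact Stirling.stirlingSeq'_antitone.le_of_tendsto ht m

lemma my_stirling_lower (n : ℕ) (hn : 1 ≤ n) :
    Real.sqrt (2*n) * ((n : ℝ)/Real.exp 1)^n ≤ (n.factorial : ℝ) := by
  have h1 : (1:ℝ) ≤ Stirling.stirlingSeq n :=
    le_trans (by rw [show (1:ℝ) = Real.sqrt 1 by simp]; exact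
      Real.sqrt_le_sqrt (by linarith [Real.pi_gt_three])) (sqrtpi_le_stirlingSeq n hn)
  have hpos : (0:ℝ) < Real.sqrt (2*n) * ((n : ℝ)/Real.exp 1)^n := by
    have : (0:ℝ) < n := by exact_mod_cast hn
    positivity
  rw [Stirling.stirlingSeq, le_div_iff₀ hpos, one_mul] at h1
  exact h1

lemma my_stirling_upper (n : ℕ) (hn : 1 ≤ n) :
    (n.factorial : ℝ) ≤ Real.exp 1 * Real.sqrt n * ((n:ℝ)/Real.exp 1)^n := by
  have h1 : Stirling.stirlingSeq n ≤ Real.exp 1 / Real.sqrt 2 := by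
    rw [← Stirling.stirlingSeq_one]
    obtain ⟨m, rfl⟩ : ∃ m, n = m + 1 := ⟨n - 1, by omega⟩
    exact Stirling.stirlingSeq'_antitone (Nat.zero_le m)
  have hpos : (0:ℝ) < Real.sqrt (2*n) * ((n : ℝ)/Real.exp 1)^n := by
    have : (0:ℝ) < n := by exact_mod_cast hn
    positivity
  rw [Stirling.stirlingSeq, div_le_div_iff₀ hpos (by positivity)] at h1
  have h2 : Real.sqrt (2*n) = Real.sqrt 2 * Real.sqrt n := Real.sqrt_mul (by norm_num) _
  have h3 : (0:ℝ) < Real.sqrt 2 := by positivity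
  rw [h2] at h1
  nlinarith [h1, h3]

lemma kl_le_chisq (m b : ℕ) (ρ : ℝ) (hρ0 : 0 < ρ) (hρ1 : ρ < 1)
    (hm : 1 ≤ m) (hb : 1 ≤ b) :
    Real.exp (-((m : ℝ) - (m+b)*ρ)^2 / ((m+b)*ρ*(1-ρ))) ≤
      ((m+b)*ρ/(m:ℝ))^m * ((m+b)*(1-ρ)/(b:ℝ))^b := by
  have hA : (0:ℝ) < m := by exact_mod_cast hm
  have hB : (0:ℝ) < b := by exact_mod_cast hb
  have hq : (0:ℝ) < 1 - ρ := by linarith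
  have hK : (0:ℝ) < (m:ℝ) + b := by linarith
  have h1 : (0:ℝ) < ((m:ℝ)+b)*ρ/(m:ℝ) := by positivity
  have h2 : (0:ℝ) < ((m:ℝ)+b)*(1-ρ)/(b:ℝ) := by positivity
  rw [show (((m:ℝ)+b)*ρ/(m:ℝ))^m = Real.exp ((m:ℝ) * Real.log (((m:ℝ)+b)*ρ/(m:ℝ))) by
      rw [← Real.exp_log h1, ← Real.exp_nat_mul]; rw [Real.exp_log h1],
    show (((m:ℝ)+b)*(1-ρ)/(b:ℝ))^b = Real.exp ((b:ℝ) * Real.log (((m:ℝ)+b)*(1-ρ)/(b:ℝ))) by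
      rw [← Real.exp_log h2, ← Real.exp_nat_mul]; rw [Real.exp_log h2],
    ← Real.exp_add, Real.exp_le_exp]
  have l1 : 1 - (m:ℝ)/(((m:ℝ)+b)*ρ) ≤ Real.log (((m:ℝ)+b)*ρ/(m:ℝ)) := by
    have := Real.one_sub_inv_le_log_of_pos h1
    rwa [inv_div] at this
  have l2 : 1 - (b:ℝ)/(((m:ℝ)+b)*(1-ρ)) ≤ Real.log (((m:ℝ)+b)*(1-ρ)/(b:ℝ)) := by
    have := Real.one_sub_inv_le_log_of_pos h2
    rwa [inv_div] at this
  have key : -((m : ℝ) - (m+b)*ρ)^2 / ((m+b)*ρ*(1-ρ)) =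
      (m:ℝ) * (1 - (m:ℝ)/(((m:ℝ)+b)*ρ)) + (b:ℝ) * (1 - (b:ℝ)/(((m:ℝ)+b)*(1-ρ))) := by
    rw [div_eq_iff (by positivity : (((m:ℝ)+b)*ρ*(1-ρ)) ≠ 0)]
    field_simp
    ring
  rw [key]
  have := mul_le_mul_of_nonneg_left l1 hA.le
  have := mul_le_mul_of_nonneg_left l2 hB.le
  linarith

lemma pmf_lower (m b : ℕ) (ρ : ℝ) (hρ0 : 0 < ρ) (hρ1 : ρ < 1) (hm : 1 ≤ m) (hb : 1 ≤ b) :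
    Real.sqrt 2 / Real.exp 1 ^ 2 * Real.sqrt (((m:ℝ)+b) / ((m:ℝ) * b)) *
      Real.exp (-((m : ℝ) - (m+b)*ρ)^2 / (((m:ℝ)+b)*ρ*(1-ρ))) ≤
    ((m+b).choose m : ℝ) * ρ^m * (1-ρ)^b := by
  have hA : (0:ℝ) < m := by exact_mod_cast hm
  have hB : (0:ℝ) < b := by exact_mod_cast hb
  have hq : (0:ℝ) < 1 - ρ := by linarith
  have hK : (0:ℝ) < (m:ℝ) + b := by linarith
  set e : ℝ := Real.exp 1 with he
  have hep : (0:ℝ) < e := Real.exp_pos 1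
  -- Stirling bounds
  have hL : Real.sqrt (2*((m:ℝ)+b)) * (((m:ℝ)+b)/e)^(m+b) ≤ ((m+b).factorial : ℝ) := by
    have := my_stirling_lower (m+b) (by omega)
    push_cast at this ⊢
    convert this using 3 <;> push_cast <;> ring
  have hUm : (m.factorial : ℝ) ≤ e * Real.sqrt m * ((m:ℝ)/e)^m := my_stirling_upper m hm
  have hUb : (b.factorial : ℝ) ≤ e * Real.sqrt b * ((b:ℝ)/e)^b := my_stirling_upper b hb
  have hchoose : ((m+b).choose m : ℝ) = ((m+b).factorial : ℝ) / ((m.factorial : ℝ) * (b.factorial : ℝ)) := by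
    rw [Nat.cast_choose ℝ (Nat.le_add_right m b), Nat.add_sub_cancel_left]
  have hdpos : (0:ℝ) < e * Real.sqrt m * ((m:ℝ)/e)^m * (e * Real.sqrt b * ((b:ℝ)/e)^b) := by
    positivity
  have hCge : Real.sqrt (2*((m:ℝ)+b)) * (((m:ℝ)+b)/e)^(m+b) /
      (e * Real.sqrt m * ((m:ℝ)/e)^m * (e * Real.sqrt b * ((b:ℝ)/e)^b)) ≤ ((m+b).choose m : ℝ) := by
    rw [hchoose]
    apply div_le_div₀ (by positivity) hL (by positivity)
    exact mul_le_mul hUm hUb (by positivity) (by positivity)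
  -- multiply by ρ^m (1-ρ)^b
  have hstep : Real.sqrt (2*((m:ℝ)+b)) * (((m:ℝ)+b)/e)^(m+b) /
      (e * Real.sqrt m * ((m:ℝ)/e)^m * (e * Real.sqrt b * ((b:ℝ)/e)^b)) * (ρ^m * (1-ρ)^b) ≤
      ((m+b).choose m : ℝ) * ρ^m * (1-ρ)^b := by
    rw [mul_assoc (((m+b).choose m : ℝ))]
    exact mul_le_mul_of_nonneg_right hCge (by positivity)
  refine le_trans ?_ hstep
  -- algebraic identity + KL bound
  have hiden : Real.sqrt (2*((m:ℝ)+b)) * (((m:ℝ)+b)/e)^(m+b) /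
      (e * Real.sqrt m * ((m:ℝ)/e)^m * (e * Real.sqrt b * ((b:ℝ)/e)^b)) * (ρ^m * (1-ρ)^b) =
      Real.sqrt 2 / e ^ 2 * Real.sqrt (((m:ℝ)+b) / ((m:ℝ) * b)) *
        ((((m:ℝ)+b)*ρ/(m:ℝ))^m * ((((m:ℝ)+b))*(1-ρ)/(b:ℝ))^b) := by
    have e1 : Real.sqrt (2*((m:ℝ)+b)) = Real.sqrt 2 * Real.sqrt ((m:ℝ)+b) :=
      Real.sqrt_mul (by norm_num) _
    have e2 : Real.sqrt (((m:ℝ)+b) / ((m:ℝ)*b)) = Real.sqrt ((m:ℝ)+b) / (Real.sqrt m * Real.sqrt b) := by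
      rw [Real.sqrt_div hK.le, Real.sqrt_mul hA.le]
    rw [e1, e2, pow_add]
    simp only [div_pow, mul_pow]
    have hsm : Real.sqrt (m:ℝ) ≠ 0 := ne_of_gt (Real.sqrt_pos.mpr hA)
    have hsb : Real.sqrt (b:ℝ) ≠ 0 := ne_of_gt (Real.sqrt_pos.mpr hB)
    have hmm : ((m:ℝ))^m ≠ 0 := by positivity
    have hbb : ((b:ℝ))^b ≠ 0 := by positivity
    have hem : e^m ≠ 0 := by positivity
    have heb : e^b ≠ 0 := by positivity
    field_simp
  rw [hiden]
  apply mul_le_mul_of_nonneg_left (kl_le_chisq m b ρ hρ0 hρ1 hm hb) (by positivity)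
open Finset

lemma card_count (k m : ℕ) :
    (Finset.univ.filter (fun ω : Fin k → Bool =>
      (Finset.univ.filter (fun i => ω i = true)).card = m)).card = k.choose m := by
  rw [show k.choose m = (Finset.powersetCard m (Finset.univ : Finset (Fin k))).card from by
    rw [Finset.card_powersetCard, Finset.card_univ, Fintype.card_fin]]
  refine Finset.card_bij'
    (i := fun (ω : Fin k → Bool) (_ : ω ∈ Finset.univ.filter (fun ω : Fin k → Bool =>
      (Finset.univ.filter (fun i => ω i = true)).card = m)) =>
        Finset.univ.filter (fun i => ω i = true))
    (j := fun (s : Finset (Fin k)) (_ : s ∈ Finset.powersetCard m Finset.univ) =>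
      fun i => decide (i ∈ s)) ?_ ?_ ?_ ?_
  · intro ω hω
    simp only [Finset.mem_powersetCard]
    refine ⟨Finset.filter_subset _ _, ?_⟩
    simpa using (Finset.mem_filter.mp hω).2
  · intro s hs
    simp only [Finset.mem_filter, Finset.mem_univ, true_and]
    rw [Finset.mem_powersetCard] at hs
    rw [← hs.2]
    congr 1
    ext i
    simp
  · intro ω hω
    funext i
    simp
  · intro s hs
    ext i
    simp

lemma prod_weight (k : ℕ) (ρ : ℝ) (ω : Fin k → Bool) :
    ∏ i, (if ω i then ρ else 1-ρ) =
      ρ^((Finset.univ.filter fun i => ω i = true).card) *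
        (1-ρ)^(k - (Finset.univ.filter fun i => ω i = true).card) := by
  rw [Finset.prod_ite, Finset.prod_const, Finset.prod_const]
  congr 2
  have h := Finset.card_filter_add_card_filter_not
    (s := (Finset.univ : Finset (Fin k))) (p := fun i => ω i = true)
  simp only [Finset.card_univ, Fintype.card_fin] at h
  omega

lemma sum_count (k m : ℕ) (ρ : ℝ) :
    ∑ ω ∈ Finset.univ.filter (fun ω : Fin k → Bool =>
        (Finset.univ.filter fun i => ω i = true).card = m),
      ∏ i, (if ω i then ρ else 1-ρ) = (k.choose m : ℝ) * ρ^m * (1-ρ)^(k-m) := by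
  have h1 : ∀ ω ∈ Finset.univ.filter (fun ω : Fin k → Bool =>
        (Finset.univ.filter fun i => ω i = true).card = m),
      (∏ i, (if ω i then ρ else 1-ρ)) = ρ^m * (1-ρ)^(k-m) := by
    intro ω hω
    rw [Finset.mem_filter] at hω
    rw [prod_weight, hω.2]
  rw [Finset.sum_congr rfl h1, Finset.sum_const, card_count, nsmul_eq_mul]
  ring

lemma pmf_lower' (k m : ℕ) (ρ : ℝ) (hρ0 : 0 < ρ) (hρ1 : ρ < 1)
    (hm : 1 ≤ m) (hmk : m < k) :
    Real.sqrt 2 / Real.exp 1 ^ 2 * Real.sqrt ((k:ℝ) / ((m:ℝ) * ((k:ℝ)-(m:ℝ)))) *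
      Real.exp (-((m : ℝ) - (k:ℝ)*ρ)^2 / ((k:ℝ)*ρ*(1-ρ))) ≤
    (k.choose m : ℝ) * ρ^m * (1-ρ)^(k-m) := by
  obtain ⟨b, rfl⟩ : ∃ b, k = m + b := ⟨k - m, by omega⟩
  have hb : 1 ≤ b := by omega
  have h := pmf_lower m b ρ hρ0 hρ1 hm hb
  have h1 : ((m:ℝ) + b) = ((m + b : ℕ) : ℝ) := by push_cast; ring
  have h2 : m + b - m = b := by omega
  rw [h2]
  calc Real.sqrt 2 / Real.exp 1 ^ 2 *
        Real.sqrt (((m+b:ℕ):ℝ) / ((m:ℝ) * (((m+b:ℕ):ℝ)-(m:ℝ)))) *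
        Real.exp (-((m : ℝ) - ((m+b:ℕ):ℝ)*ρ)^2 / (((m+b:ℕ):ℝ)*ρ*(1-ρ)))
      = Real.sqrt 2 / Real.exp 1 ^ 2 * Real.sqrt (((m:ℝ)+b) / ((m:ℝ) * b)) *
        Real.exp (-((m : ℝ) - ((m:ℝ)+b)*ρ)^2 / (((m:ℝ)+b)*ρ*(1-ρ))) := by
        push_cast; ring_nf
    _ ≤ ((m+b).choose m : ℝ) * ρ^m * (1-ρ)^b := h


set_option maxHeartbeats 2000000 in
lemma per_m_bound (k m : ℕ) (ρ lam s : ℝ) (hρ0 : 0 < ρ) (hρ2 : ρ ≤ 1/2)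
    (hkpos : (0:ℝ) < k)
    (hs2 : s^2 = (k:ℝ)*ρ*(1-ρ)) (hspos : 0 < s) (hsgt : 2 < s)
    (hlam0 : 0 < lam) (hlam4 : lam ≤ s/4)
    (hxm : ρ*(k:ℝ) + lam*s ≤ (m:ℝ)) (hmy : (m:ℝ) ≤ ρ*(k:ℝ) + (lam+1)*s) :
    1/(Real.exp 1^2 * s) * Real.exp (-(2*lam^2+2)) ≤
      (k.choose m : ℝ) * ρ^m * (1-ρ)^(k-m) := by
  have hq : 0 < 1 - ρ := by linarith
  have h34 : (lam+1)*s ≤ (3/4)*s^2 := by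
    have h1 : lam + 1 ≤ (3/4)*s := by linarith
    calc (lam+1)*s ≤ ((3/4)*s)*s := mul_le_mul_of_nonneg_right h1 hspos.le
      _ = (3/4)*s^2 := by ring
  have hs2k : s^2 ≤ ρ * k := by nlinarith
  have hmub2 : (m:ℝ) ≤ (7/4)*(ρ*k) := by linarith
  have hm1 : 1 ≤ m := by
    have : (0:ℝ) < m := by nlinarith [mul_pos hlam0 hspos]
    exact_mod_cast Nat.one_le_iff_ne_zero.mpr (by
      rintro rfl; norm_num at this)
  have hmr : (1:ℝ) ≤ (m:ℝ) := by exact_mod_cast hm1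
  have hmltk : (m:ℝ) < k := by nlinarith
  have hmk : m < k := by exact_mod_cast hmltk
  have hkm : (0:ℝ) < (k:ℝ) - m := by linarith
  have hρk : ρ * k ≤ (m:ℝ) := by nlinarith [mul_pos hlam0 hspos]
  have hkmub : (k:ℝ) - m ≤ (k:ℝ)*(1-ρ) := by nlinarith
  have hprod : (m:ℝ) * ((k:ℝ) - m) ≤ 2*(k:ℝ)*s^2 := by nlinarith
  have hA : 1/(Real.sqrt 2 * s) ≤ Real.sqrt ((k:ℝ) / ((m:ℝ) * ((k:ℝ)-(m:ℝ)))) := by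
    have hsq : (1/(Real.sqrt 2 * s))^2 ≤ (k:ℝ) / ((m:ℝ) * ((k:ℝ)-(m:ℝ))) := by
      rw [div_pow, mul_pow, Real.sq_sqrt (by norm_num : (0:ℝ) ≤ 2), one_pow]
      rw [div_le_div_iff₀ (by positivity) (mul_pos (by linarith) hkm)]
      nlinarith [hprod]
    have h := Real.sqrt_le_sqrt hsq
    rwa [Real.sqrt_sq (by positivity)] at h
  have hB : Real.exp (-(2*lam^2+2)) ≤
      Real.exp (-((m:ℝ) - (k:ℝ)*ρ)^2 / ((k:ℝ)*ρ*(1-ρ))) := by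
    rw [Real.exp_le_exp, ← hs2, neg_div, neg_le_neg_iff, div_le_iff₀ (by positivity)]
    have hd1 : (m:ℝ) - (k:ℝ)*ρ ≤ (lam+1)*s := by
      rw [mul_comm (k:ℝ) ρ]; linarith
    have hd0 : (0:ℝ) ≤ (m:ℝ) - (k:ℝ)*ρ := by
      rw [mul_comm (k:ℝ) ρ]; linarith
    nlinarith [sq_nonneg (lam - 1), sq_nonneg s, mul_nonneg hd0 hd0]
  refine le_trans ?_ (pmf_lower' k m ρ hρ0 (by linarith) hm1 hmk)
  calc 1/(Real.exp 1^2 * s) * Real.exp (-(2*lam^2+2))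
      = (Real.sqrt 2 / Real.exp 1 ^ 2 * (1/(Real.sqrt 2 * s))) * Real.exp (-(2*lam^2+2)) := by
        have h2 : Real.sqrt 2 ≠ 0 := by positivity
        field_simp
    _ ≤ Real.sqrt 2 / Real.exp 1 ^ 2 * Real.sqrt ((k:ℝ) / ((m:ℝ) * ((k:ℝ)-(m:ℝ)))) *
          Real.exp (-((m:ℝ) - (k:ℝ)*ρ)^2 / ((k:ℝ)*ρ*(1-ρ))) := by
        rw [mul_assoc, mul_assoc]
        refine mul_le_mul_of_nonneg_left ?_ (by positivity)
        exact mul_le_mul hA hB (Real.exp_pos _).le (Real.sqrt_nonneg _)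


lemma one_sub_pow_ge (k : ℕ) (ρ : ℝ) (hρ0 : 0 < ρ) (hρ2 : ρ ≤ 1/2)
    (h8 : ρ * (k:ℝ) ≤ 8) : Real.exp (-16) ≤ (1-ρ)^k := by
  have hq : 0 < 1 - ρ := by linarith
  have e1 : Real.exp (-(2*ρ)) ≤ 1 - ρ := by
    rw [Real.exp_neg, inv_le_comm₀ (Real.exp_pos _) hq]
    calc (1-ρ)⁻¹ ≤ 1 + 2*ρ := by
          rw [inv_le_iff_one_le_mul₀ hq]
          nlinarith
      _ ≤ Real.exp (2*ρ) := by linarith [Real.add_one_le_exp (2*ρ)]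
  have e2 : Real.exp (-(2*ρ))^k ≤ (1-ρ)^k := pow_le_pow_left₀ (Real.exp_nonneg _) e1 k
  rw [← Real.exp_nat_mul] at e2
  refine le_trans ?_ e2
  rw [Real.exp_le_exp]
  nlinarith


set_option maxHeartbeats 1000000 in
/-- **Anti-concentration for the binomial distribution** (Lemma 4.6 of the paper):
there are constants `c̃, C̃, c > 0` such that for iid Bernoulli(ρ) variables
`X₁, …, X_k` with `0 < ρ ≤ 1/2` and `σ = √(kρ(1-ρ))`, for every `0 < λ ≤ c·σ`,
`P[|Σ Xᵢ - ρk| ≥ λσ] ≥ c̃·exp(-C̃·λ²)`.  The probability is written explicitly as a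
sum of the product weights of the outcomes `ω : Fin k → Bool` in the event. -/
theorem binomial_anticoncentration :
    ∃ ctil Ctil c : ℝ, 0 < ctil ∧ 0 < Ctil ∧ 0 < c ∧
      ∀ (k : ℕ), 0 < k → ∀ (ρ : ℝ), 0 < ρ → ρ ≤ 1 / 2 →
      ∀ (lam : ℝ), 0 < lam → lam ≤ c * Real.sqrt (k * ρ * (1 - ρ)) →
      ctil * Real.exp (-Ctil * lam ^ 2) ≤
        ∑ ω ∈ Finset.univ.filter (fun ω : Fin k → Bool =>
            lam * Real.sqrt (k * ρ * (1 - ρ)) ≤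
              |(∑ i, (if ω i then (1 : ℝ) else 0)) - ρ * k|),
          ∏ i, (if ω i then ρ else 1 - ρ) := by
  refine ⟨Real.exp (-16), 2, 1/4, Real.exp_pos _, by norm_num, by norm_num, ?_⟩
  intro k hk ρ hρ0 hρ2 lam hlam0 hlamc
  have hq : 0 < 1 - ρ := by linarith
  have hk1 : (1:ℝ) ≤ k := by exact_mod_cast hk
  have hkpos : (0:ℝ) < k := by linarith
  have hvar : 0 < (k:ℝ)*ρ*(1-ρ) := by positivity
  set s : ℝ := Real.sqrt ((k:ℝ) * ρ * (1 - ρ)) with hs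
  have hspos : 0 < s := Real.sqrt_pos.mpr hvar
  have hs2 : s^2 = (k:ℝ)*ρ*(1-ρ) := Real.sq_sqrt hvar.le
  have hs2k : s^2 ≤ ρ * k := by
    rw [hs2]; nlinarith
  have hlam4 : lam ≤ s/4 := by rw [hs]; linarith [hlamc]
  have hls : lam * s ≤ s^2/4 := by nlinarith
  have wnn : ∀ ω : Fin k → Bool, (0:ℝ) ≤ ∏ i, (if ω i then ρ else 1-ρ) := fun ω =>
    Finset.prod_nonneg (fun i _ => by split <;> linarith)
  have hexp2 : Real.exp (-2 * lam^2) ≤ 1 := Real.exp_le_one_iff.mpr (by nlinarith)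
  rcases le_or_gt s 2 with hsle | hsgt
  · -- small variance case: the all-false outcome suffices
    have hmem : (fun _ => false : Fin k → Bool) ∈ Finset.univ.filter
        (fun ω : Fin k → Bool => lam * s ≤ |(∑ i, (if ω i then (1:ℝ) else 0)) - ρ * k|) := by
      rw [Finset.mem_filter]
      refine ⟨Finset.mem_univ _, ?_⟩
      simp only [Bool.false_eq_true, if_false, Finset.sum_const_zero]
      rw [zero_sub, abs_neg, abs_of_nonneg (by positivity)]
      linarith
    have hsingle : (1-ρ)^k ≤ ∑ ω ∈ Finset.univ.filter
        (fun ω : Fin k → Bool => lam * s ≤ |(∑ i, (if ω i then (1:ℝ) else 0)) - ρ * k|),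
          ∏ i, (if ω i then ρ else 1-ρ) := by
      have := Finset.single_le_sum (f := fun ω : Fin k → Bool => ∏ i, (if ω i then ρ else 1-ρ))
        (fun ω _ => wnn ω) hmem
      simpa using this
    refine le_trans ?_ hsingle
    have h8 : ρ * (k:ℝ) ≤ 8 := by nlinarith
    calc Real.exp (-16) * Real.exp (-2*lam^2) ≤ Real.exp (-16) * 1 :=
          mul_le_mul_of_nonneg_left hexp2 (Real.exp_pos _).le
      _ = Real.exp (-16) := mul_one _
      _ ≤ (1-ρ)^k := one_sub_pow_ge k ρ hρ0 hρ2 h8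
  · -- main case
    set x : ℝ := ρ * k + lam * s with hx
    set y : ℝ := ρ * k + (lam+1) * s with hy
    have hx0 : 0 < x := by positivity
    have hy0 : (0:ℝ) ≤ y := by positivity
    have hyx : y = x + s := by rw [hx, hy]; ring
    have hax : x ≤ ⌈x⌉₊ := Nat.le_ceil x
    have hax' : (⌈x⌉₊:ℝ) < x + 1 := Nat.ceil_lt_add_one hx0.le
    have hby : (⌊y⌋₊:ℝ) ≤ y := Nat.floor_le hy0
    have hby' : y - 1 < ⌊y⌋₊ := Nat.sub_one_lt_floor y
    have hab : ⌈x⌉₊ ≤ ⌊y⌋₊ := by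
      have h : (⌈x⌉₊:ℝ) < (⌊y⌋₊:ℝ) := by linarith
      exact_mod_cast h.le
    have hcard : s - 1 ≤ ((Finset.Icc ⌈x⌉₊ ⌊y⌋₊).card : ℝ) := by
      rw [Nat.card_Icc, Nat.cast_sub (by omega)]
      push_cast
      linarith
    have key : ∀ m ∈ Finset.Icc ⌈x⌉₊ ⌊y⌋₊,
        1/(Real.exp 1^2 * s) * Real.exp (-(2*lam^2+2)) ≤
          (k.choose m : ℝ) * ρ^m * (1-ρ)^(k-m) := by
      intro m hm
      rw [Finset.mem_Icc] at hm
      have hxm : ρ*(k:ℝ) + lam*s ≤ (m:ℝ) := le_trans hax (by exact_mod_cast hm.1)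
      have hmy : (m:ℝ) ≤ ρ*(k:ℝ) + (lam+1)*s := le_trans (by exact_mod_cast hm.2) hby
      exact per_m_bound k m ρ lam s hρ0 hρ2 hkpos hs2 hspos hsgt hlam0 hlam4 hxm hmy
    -- the outcomes with m ones, m in the interval, are inside the event
    have hsub : Finset.univ.filter (fun ω : Fin k → Bool =>
          (Finset.univ.filter fun i => ω i = true).card ∈ Finset.Icc ⌈x⌉₊ ⌊y⌋₊) ⊆
        Finset.univ.filter (fun ω : Fin k → Bool =>
          lam * s ≤ |(∑ i, (if ω i then (1:ℝ) else 0)) - ρ * k|) := by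
      intro ω hω
      rw [Finset.mem_filter] at hω ⊢
      refine ⟨Finset.mem_univ _, ?_⟩
      rw [Finset.mem_Icc] at hω
      obtain ⟨-, h1, h2⟩ := hω
      have hsum : (∑ i, (if ω i then (1:ℝ) else 0)) =
          ((Finset.univ.filter fun i => ω i = true).card : ℝ) := by
        rw [Finset.sum_boole]
      rw [hsum]
      have hc1 : x ≤ ((Finset.univ.filter fun i => ω i = true).card : ℝ) :=
        le_trans hax (by exact_mod_cast h1)
      rw [abs_of_nonneg (by rw [hx] at hc1; linarith [mul_nonneg hlam0.le hspos.le])]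
      rw [hx] at hc1
      linarith
    have hfib : ∑ m ∈ Finset.Icc ⌈x⌉₊ ⌊y⌋₊, ((k.choose m : ℝ) * ρ^m * (1-ρ)^(k-m)) =
        ∑ ω ∈ Finset.univ.filter (fun ω : Fin k → Bool =>
          (Finset.univ.filter fun i => ω i = true).card ∈ Finset.Icc ⌈x⌉₊ ⌊y⌋₊),
          ∏ i, (if ω i then ρ else 1-ρ) := by
      rw [← Finset.sum_fiberwise_of_maps_to (g := fun ω : Fin k → Bool =>
        (Finset.univ.filter fun i => ω i = true).card)
        (fun ω hω => (Finset.mem_filter.mp hω).2)]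
      refine Finset.sum_congr rfl (fun m hm => ?_)
      rw [← sum_count k m ρ]
      refine Finset.sum_congr ?_ (fun _ _ => rfl)
      have hm2 := Finset.mem_Icc.mp hm
      ext ω
      simp only [Finset.mem_filter, Finset.mem_univ, true_and, Finset.mem_Icc]
      omega
    have hmain : ((Finset.Icc ⌈x⌉₊ ⌊y⌋₊).card : ℝ) *
        (1/(Real.exp 1^2 * s) * Real.exp (-(2*lam^2+2))) ≤
        ∑ ω ∈ Finset.univ.filter (fun ω : Fin k → Bool =>
          lam * s ≤ |(∑ i, (if ω i then (1:ℝ) else 0)) - ρ * k|),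
          ∏ i, (if ω i then ρ else 1-ρ) := by
      calc ((Finset.Icc ⌈x⌉₊ ⌊y⌋₊).card : ℝ) *
            (1/(Real.exp 1^2 * s) * Real.exp (-(2*lam^2+2)))
          ≤ ∑ m ∈ Finset.Icc ⌈x⌉₊ ⌊y⌋₊, ((k.choose m : ℝ) * ρ^m * (1-ρ)^(k-m)) := by
            have := Finset.card_nsmul_le_sum (Finset.Icc ⌈x⌉₊ ⌊y⌋₊) _ _ key
            rwa [nsmul_eq_mul] at this
        _ = _ := hfib
        _ ≤ _ := Finset.sum_le_sum_of_subset_of_nonneg hsub (fun ω _ _ => wnn ω)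
    refine le_trans ?_ hmain
    -- final numeric comparison
    have hcs : s/2 ≤ ((Finset.Icc ⌈x⌉₊ ⌊y⌋₊).card : ℝ) := by linarith
    have hC0 : (0:ℝ) ≤ 1/(Real.exp 1^2 * s) * Real.exp (-(2*lam^2+2)) := by positivity
    refine le_trans ?_ (mul_le_mul_of_nonneg_right hcs hC0)
    have hE : Real.exp (-(2*lam^2+2)) = Real.exp (-2*lam^2) * Real.exp (-2) := by
      rw [← Real.exp_add]; ring_nf
    have hid : s/2 * (1/(Real.exp 1^2 * s) * Real.exp (-(2*lam^2+2))) =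
        Real.exp (-2*lam^2) * (Real.exp (-2) / (2 * Real.exp 1^2)) := by
      rw [hE]
      field_simp
    rw [hid]
    rw [show Real.exp (-16) * Real.exp (-2*lam^2) = Real.exp (-2*lam^2) * Real.exp (-16) by ring]
    refine mul_le_mul_of_nonneg_left ?_ (Real.exp_pos _).le
    -- exp(-16) ≤ exp(-2)/(2 e^2)
    rw [le_div_iff₀ (by positivity)]
    have h12 : (2:ℝ) ≤ Real.exp 12 := by linarith [Real.add_one_le_exp (12:ℝ)]
    have hee : Real.exp (-16) * (2 * Real.exp 1^2) = 2 * Real.exp (-14) := by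
      rw [show Real.exp 1^2 = Real.exp 2 by rw [← Real.exp_nat_mul]; norm_num]
      rw [show Real.exp (-16) * (2*Real.exp 2) = 2*(Real.exp (-16) * Real.exp 2) by ring,
        ← Real.exp_add]
      norm_num
    rw [hee]
    have h2 : Real.exp (-2) = Real.exp 12 * Real.exp (-14) := by
      rw [← Real.exp_add]; norm_num
    rw [h2]
    nlinarith [Real.exp_pos (-14)]
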